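/- Fix 0 < r₀ < 1 and let X = {z ∈ ℂ : |z| < r₀} be equipped with the hyperbolic distance \tilde{h} and with the hyperbolic area measure μ(S) = ∫_S 4/(1 − |z|²)² dm(z), where m is planar Lebesgue measure. Then (X, \tilde{h}, μ) is Ahlfors 2-regular: there exists a constant C ≥ 1 such that (1/C)·R² ≤ μ({z ∈ X : \tilde{h}(z, z₀) < R}) ≤ C·R² for every z₀ ∈ X and every 0 < R < diam_{\tilde{h}} X, where diam_{\tilde{h}} X is the diameter of X in the metric \tilde{h}. -/

import Mathlib

open MeasureTheory

/-- The hyperbolic distance in the unit disk: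
`h̃(z₁, z₂) = log((1 + t)/(1 - t))` with `t = |z₁ - z₂| / |1 - z₁ * conj z₂|`. -/
noncomputable def hypDist (z₁ z₂ : ℂ) : ℝ :=
  Real.log ((1 + ‖z₁ - z₂‖ / ‖1 - z₁ * (starRingEnd ℂ) z₂‖) /
    (1 - ‖z₁ - z₂‖ / ‖1 - z₁ * (starRingEnd ℂ) z₂‖))

/-- The hyperbolic area of a set `S ⊂ 𝔻`: `μ(S) = ∫_S 4/(1 - |z|²)² dm(z)`. -/
noncomputable def hypArea (S : Set ℂ) : ℝ :=
  ∫ z in S, 4 / (1 - ‖z‖ ^ 2) ^ 2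

lemma normSq_identity (z w : ℂ) :
    Complex.normSq (1 - z * (starRingEnd ℂ) w) - Complex.normSq (z - w)
      = (1 - Complex.normSq z) * (1 - Complex.normSq w) := by
  have key : ((1 - z * (starRingEnd ℂ) w) * (starRingEnd ℂ) (1 - z * (starRingEnd ℂ) w)
      - (z - w) * (starRingEnd ℂ) (z - w))
      = (1 - z * (starRingEnd ℂ) z) * (1 - w * (starRingEnd ℂ) w) := by
    simp only [map_sub, map_mul, map_one, Complex.conj_conj]
    ring
  rw [Complex.mul_conj, Complex.mul_conj, Complex.mul_conj, Complex.mul_conj] at key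
  exact_mod_cast key

set_option maxHeartbeats 1000000 in
lemma hypDist_bounds (r₀ : ℝ) (hr₀ : 0 < r₀) (hr₀' : r₀ < 1) :
    ∃ b : ℝ, 1 ≤ b ∧ ∀ z w : ℂ, ‖z‖ < r₀ → ‖w‖ < r₀ →
      ‖z - w‖ / 2 ≤ hypDist z w ∧ hypDist z w ≤ b * ‖z - w‖ := by
  set e := 1 - r₀ ^ 2 with he_def
  have he : 0 < e := by nlinarith
  have he1 : e ≤ 1 := by nlinarith
  refine ⟨(1 + 8 / e ^ 2) / e, ?_, ?_⟩
  · rw [le_div_iff₀ he]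
    have : 0 < 8 / e ^ 2 := by positivity
    nlinarith
  intro z w hz hw
  have hznn : (0:ℝ) ≤ ‖z‖ := norm_nonneg z
  have hwnn : (0:ℝ) ≤ ‖w‖ := norm_nonneg w
  obtain ⟨D, hD_def⟩ : ∃ x, x = ‖z - w‖ := ⟨_, rfl⟩
  obtain ⟨A, hA_def⟩ : ∃ x, x = ‖1 - z * (starRingEnd ℂ) w‖ := ⟨_, rfl⟩
  have hDnn : 0 ≤ D := hD_def ▸ norm_nonneg _
  have hA_ge : 1 - ‖z‖ * ‖w‖ ≤ A := by
    rw [hA_def]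
    simpa only [norm_one, norm_mul, Complex.norm_conj] using
      norm_sub_norm_le (1 : ℂ) (z * (starRingEnd ℂ) w)
  have hA_le2 : A ≤ 2 := by
    rw [hA_def]
    have h := norm_sub_le (1 : ℂ) (z * (starRingEnd ℂ) w)
    simp only [norm_one, norm_mul, Complex.norm_conj] at h
    nlinarith
  have hAe : e ≤ A := by nlinarith
  have hApos : 0 < A := lt_of_lt_of_le he hAe
  -- the identity
  have hid : A ^ 2 - D ^ 2 = (1 - ‖z‖ ^ 2) * (1 - ‖w‖ ^ 2) := by
    rw [hA_def, hD_def, Complex.sq_norm, Complex.sq_norm, Complex.sq_norm, Complex.sq_norm]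
    exact normSq_identity z w
  have hprod : e * e ≤ (1 - ‖z‖ ^ 2) * (1 - ‖w‖ ^ 2) := by
    have h1 : e ≤ 1 - ‖z‖ ^ 2 := by nlinarith
    have h2 : e ≤ 1 - ‖w‖ ^ 2 := by nlinarith
    nlinarith
  obtain ⟨t, ht_def⟩ : ∃ x, x = D / A := ⟨_, rfl⟩
  have htnn : 0 ≤ t := ht_def ▸ div_nonneg hDnn hApos.le
  have ht2 : t ^ 2 * A ^ 2 = D ^ 2 := by
    rw [ht_def]; field_simp
  have hD2 : D ^ 2 ≤ A ^ 2 - e * e := by linarith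
  have htlt : t < 1 := by
    by_contra hcon
    push_neg at hcon
    have ht1 : 1 ≤ t ^ 2 := by nlinarith
    have h1 : 1 * A ^ 2 ≤ t ^ 2 * A ^ 2 := mul_le_mul_of_nonneg_right ht1 (sq_nonneg A)
    nlinarith [mul_pos he he]
  have ht1 : t ^ 2 ≤ 1 := by nlinarith
  have hfac : 0 ≤ (4 - A ^ 2) * (1 - t ^ 2) :=
    mul_nonneg (by nlinarith) (by linarith)
  have h1t2 : e * e ≤ (1 - t ^ 2) * 4 := by nlinarith
  have h1t : e ^ 2 / 8 ≤ 1 - t := by nlinarith [sq_nonneg (1 - t)]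
  have h1tpos : 0 < 1 - t := by nlinarith [sq_nonneg e]
  have hform : hypDist z w = Real.log (1 + t) - Real.log (1 - t) := by
    unfold hypDist
    rw [← hD_def, ← hA_def, ← ht_def, Real.log_div (by linarith) (by linarith)]
  constructor
  · -- lower bound
    have hlog1 : 0 ≤ Real.log (1 + t) := Real.log_nonneg (by linarith)
    have hlog2 : Real.log (1 - t) ≤ -t := by
      have := Real.log_le_sub_one_of_pos h1tpos
      linarith
    have htD : D / 2 ≤ t := ht_def ▸ div_le_div_of_nonneg_left hDnn hApos hA_le2
    rw [← hD_def, hform]; linarith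
  · -- upper bound
    have hlog1 : Real.log (1 + t) ≤ t := by
      have := Real.log_le_sub_one_of_pos (show (0:ℝ) < 1 + t by linarith)
      linarith
    have hlog2 : -(t * (8 / e ^ 2)) ≤ Real.log (1 - t) := by
      have h0 : Real.log (1 - t) = - Real.log (1 - t)⁻¹ := by rw [Real.log_inv]; ring
      have h1 : Real.log (1 - t)⁻¹ ≤ (1 - t)⁻¹ - 1 :=
        Real.log_le_sub_one_of_pos (by positivity)
      have h2 : (1 - t)⁻¹ - 1 = t / (1 - t) := by field_simp; ring
      have h3 : t / (1 - t) ≤ t / (e ^ 2 / 8) :=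
        div_le_div_of_nonneg_left htnn (by positivity) h1t
      have h4 : t / (e ^ 2 / 8) = t * (8 / e ^ 2) := by field_simp
      linarith
    have htD : t ≤ D / e := ht_def ▸ div_le_div_of_nonneg_left hDnn he hAe
    rw [← hD_def, hform]
    calc Real.log (1 + t) - Real.log (1 - t) ≤ t * (1 + 8 / e ^ 2) := by linarith
      _ ≤ (D / e) * (1 + 8 / e ^ 2) := by
          apply mul_le_mul_of_nonneg_right htD (by positivity)
      _ = (1 + 8 / e ^ 2) / e * D := by ring

set_option maxHeartbeats 1000000 in
/-- The disk `X = {|z| < r₀}` (with `0 < r₀ < 1`), endowed with the hyperbolic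
distance `h̃` and the hyperbolic area measure, is Ahlfors `2`-regular: there
is `C ≥ 1` with `(1/C)·R² ≤ μ(B_{h̃}(z₀, R)) ≤ C·R²` for every `z₀ ∈ X` and
every `0 < R < diam_{h̃} X`. -/
theorem hyperbolic_disk_ahlfors_two_regular (r₀ : ℝ) (hr₀ : 0 < r₀) (hr₀' : r₀ < 1) :
    ∃ C : ℝ, 1 ≤ C ∧ ∀ z₀ : ℂ, ‖z₀‖ < r₀ → ∀ R : ℝ, 0 < R →
      R < sSup {s : ℝ | ∃ z w : ℂ, ‖z‖ < r₀ ∧ ‖w‖ < r₀ ∧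
        s = hypDist z w} →
      (1 / C) * R ^ 2 ≤ hypArea {z : ℂ | ‖z‖ < r₀ ∧ hypDist z z₀ < R} ∧
      hypArea {z : ℂ | ‖z‖ < r₀ ∧ hypDist z z₀ < R} ≤ C * R ^ 2 := by
  obtain ⟨b, hb1, hbd⟩ := hypDist_bounds r₀ hr₀ hr₀'
  have hbpos : 0 < b := lt_of_lt_of_le one_pos hb1
  have he : 0 < 1 - r₀ ^ 2 := by nlinarith
  have hπ : 0 < Real.pi := Real.pi_pos
  set K : ℝ := 4 / (1 - r₀ ^ 2) ^ 2 with hK_def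
  have hKpos : 0 < K := by positivity
  set C := max (max (4 * Real.pi * K) (4 * b ^ 2 / Real.pi)) 1 with hC_def
  have hC1 : (1:ℝ) ≤ C := le_max_right _ _
  have hCge1 : 4 * Real.pi * K ≤ C := le_trans (le_max_left _ _) (le_max_left _ _)
  have hCge2 : 4 * b ^ 2 / Real.pi ≤ C := le_trans (le_max_right _ _) (le_max_left _ _)
  refine ⟨C, hC1, ?_⟩
  intro z₀ hz₀ R hR hRd
  -- R < 2 b r₀
  have hsup : sSup {s : ℝ | ∃ z w : ℂ, ‖z‖ < r₀ ∧ ‖w‖ < r₀ ∧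
      s = hypDist z w} ≤ 2 * b * r₀ := by
    apply Real.sSup_le _ (by positivity)
    rintro s ⟨z, w, hz, hw, rfl⟩
    have h1 := (hbd z w hz hw).2
    have h2 : ‖z - w‖ ≤ ‖z‖ + ‖w‖ := by
      simpa using norm_sub_le z w
    nlinarith [norm_nonneg z, norm_nonneg w]
  have hR2 : R < 2 * b * r₀ := lt_of_lt_of_le hRd hsup
  set Bset := {z : ℂ | ‖z‖ < r₀ ∧ hypDist z z₀ < R} with hB_def
  -- measurability
  have hcont : Continuous fun z : ℂ => ‖z‖ := continuous_norm
  have hmeas_hd : Measurable fun z : ℂ => hypDist z z₀ := by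
    unfold hypDist
    have m1 : Measurable fun z : ℂ => ‖z - z₀‖ :=
      (continuous_norm.comp (continuous_id.sub continuous_const)).measurable
    have m2 : Measurable fun z : ℂ => ‖1 - z * (starRingEnd ℂ) z₀‖ :=
      (continuous_norm.comp
        (continuous_const.sub (continuous_id.mul continuous_const))).measurable
    have m3 : Measurable fun z : ℂ =>
        ‖z - z₀‖ / ‖1 - z * (starRingEnd ℂ) z₀‖ := m1.div m2
    exact Real.measurable_log.comp ((measurable_const.add m3).div (measurable_const.sub m3))
  have hBmeas : MeasurableSet Bset := by
    have hEq : Bset = {z : ℂ | ‖z‖ < r₀} ∩ {z : ℂ | hypDist z z₀ < R} := rfl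
    rw [hEq]
    exact (measurableSet_lt hcont.measurable measurable_const).inter
      (measurableSet_lt hmeas_hd measurable_const)
  -- inclusions
  have hBsub : Bset ⊆ Metric.ball z₀ (2 * R) := by
    rintro z ⟨hz1, hz2⟩
    have h := (hbd z z₀ hz1 hz₀).1
    rw [Metric.mem_ball, Complex.dist_eq]
    linarith
  set ρ := min (R / b) r₀ with hρ_def
  have hρpos : 0 < ρ := lt_min (div_pos hR hbpos) hr₀
  have hρr : ρ ≤ r₀ := min_le_right _ _
  have hρR : ρ ≤ R / b := min_le_left _ _
  have hρhalf : R / (2 * b) ≤ ρ := by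
    apply le_min
    · exact div_le_div_of_nonneg_left hR.le hbpos (by linarith)
    · rw [div_le_iff₀ (by positivity)]
      linarith
  set lam := ρ / (2 * r₀) with hlam_def
  have hlam_pos : 0 < lam := by positivity
  have hlam_le : lam ≤ 1 / 2 := by
    rw [hlam_def, div_le_iff₀ (by positivity : (0:ℝ) < 2 * r₀)]
    linarith
  set z₁ : ℂ := ((1 - lam : ℝ) : ℂ) * z₀ with hz₁_def
  have habs_z₁ : ‖z₁‖ = (1 - lam) * ‖z₀‖ := by
    rw [hz₁_def, norm_mul, Complex.norm_real, Real.norm_eq_abs, abs_of_nonneg (by linarith)]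
  have habs_z₁z₀ : ‖z₁ - z₀‖ = lam * ‖z₀‖ := by
    have hEq : z₁ - z₀ = ((-lam : ℝ) : ℂ) * z₀ := by rw [hz₁_def]; push_cast; ring
    rw [hEq, norm_mul, Complex.norm_real, Real.norm_eq_abs, abs_of_nonpos (by linarith), neg_neg]
  have hz₁r : ‖z₁‖ < r₀ - ρ / 2 := by
    rw [habs_z₁]
    have h := mul_lt_mul_of_pos_left hz₀ (show 0 < 1 - lam by linarith)
    have hEq : (1 - lam) * r₀ = r₀ - ρ / 2 := by rw [hlam_def]; field_simp
    linarith
  have hz₁z₀ : ‖z₁ - z₀‖ < ρ / 2 := by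
    rw [habs_z₁z₀]
    have h := mul_lt_mul_of_pos_left hz₀ hlam_pos
    have hEq : lam * r₀ = ρ / 2 := by rw [hlam_def]; field_simp
    linarith
  have hball_sub : Metric.ball z₁ (ρ / 2) ⊆ Bset := by
    intro z hz
    rw [Metric.mem_ball, Complex.dist_eq] at hz
    have htr : ‖z‖ ≤ ‖z - z₁‖ + ‖z₁‖ := by
      have h := norm_add_le (z - z₁) z₁
      rwa [sub_add_cancel] at h
    have hzr : ‖z‖ < r₀ := by linarith
    have htr2 : ‖z - z₀‖ ≤ ‖z - z₁‖ + ‖z₁ - z₀‖ := by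
      have h := norm_add_le (z - z₁) (z₁ - z₀)
      rwa [sub_add_sub_cancel] at h
    have hzz₀ : ‖z - z₀‖ < ρ := by linarith
    refine ⟨hzr, ?_⟩
    have h := (hbd z z₀ hzr hz₀).2
    have hbb : b * ρ ≤ R := by
      have := mul_le_mul_of_nonneg_left hρR hbpos.le
      rwa [mul_div_cancel₀ R hbpos.ne'] at this
    nlinarith
  -- measure and integral facts
  have hBfin : volume Bset < ⊤ := lt_of_le_of_lt (measure_mono hBsub) measure_ball_lt_top
  have hf_meas : Measurable fun z : ℂ => 4 / (1 - ‖z‖ ^ 2) ^ 2 :=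
    measurable_const.div ((measurable_const.sub (hcont.measurable.pow_const 2)).pow_const 2)
  have hf_bound : ∀ z ∈ Bset, 4 ≤ 4 / (1 - ‖z‖ ^ 2) ^ 2 ∧
      4 / (1 - ‖z‖ ^ 2) ^ 2 ≤ K := by
    rintro z ⟨hz1, -⟩
    have hzn := norm_nonneg z
    have h1 : 0 < 1 - ‖z‖ ^ 2 := by nlinarith
    have h2 : 1 - r₀ ^ 2 ≤ 1 - ‖z‖ ^ 2 := by nlinarith
    constructor
    · rw [le_div_iff₀ (by positivity)]
      nlinarith
    · rw [hK_def, div_le_div_iff₀ (by positivity) (by positivity)]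
      nlinarith
  have hint : IntegrableOn (fun z : ℂ => 4 / (1 - ‖z‖ ^ 2) ^ 2) Bset volume := by
    apply Measure.integrableOn_of_bounded (M := K) hBfin.ne hf_meas.aestronglyMeasurable
    refine (ae_restrict_iff' hBmeas).2 (ae_of_all _ fun z hz => ?_)
    have hfb := hf_bound z hz
    rw [Real.norm_eq_abs, abs_of_nonneg (by linarith [hfb.1])]
    exact hfb.2
  have hconst_int : ∀ c : ℝ, IntegrableOn (fun _ : ℂ => c) Bset volume := fun c =>
    integrableOn_const hBfin.ne
  have hlow : 4 * (volume Bset).toReal ≤ hypArea Bset := by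
    unfold hypArea
    have h := setIntegral_mono_on (hconst_int 4) hint hBmeas (fun z hz => (hf_bound z hz).1)
    rwa [setIntegral_const, smul_eq_mul, mul_comm, measureReal_def] at h
  have hhigh : hypArea Bset ≤ K * (volume Bset).toReal := by
    unfold hypArea
    have h := setIntegral_mono_on hint (hconst_int K) hBmeas (fun z hz => (hf_bound z hz).2)
    rwa [setIntegral_const, smul_eq_mul, mul_comm, measureReal_def] at h
  -- volume of balls
  have hvol_ball : ∀ (c : ℂ) (r : ℝ), 0 ≤ r →
      (volume (Metric.ball c r)).toReal = Real.pi * r ^ 2 := by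
    intro c r hr
    rw [Complex.volume_ball, ENNReal.toReal_mul, ENNReal.toReal_pow,
      ENNReal.toReal_ofReal hr, ENNReal.coe_toReal, NNReal.coe_real_pi]
    ring
  have hm_up : (volume Bset).toReal ≤ Real.pi * (2 * R) ^ 2 := by
    rw [← hvol_ball z₀ (2 * R) (by linarith)]
    exact ENNReal.toReal_mono measure_ball_lt_top.ne (measure_mono hBsub)
  have hm_low : Real.pi * (ρ / 2) ^ 2 ≤ (volume Bset).toReal := by
    rw [← hvol_ball z₁ (ρ / 2) (by linarith)]
    exact ENNReal.toReal_mono hBfin.ne (measure_mono hball_sub)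
  constructor
  · -- lower bound
    have h1 : 1 / C * R ^ 2 ≤ Real.pi / (4 * b ^ 2) * R ^ 2 := by
      apply mul_le_mul_of_nonneg_right _ (sq_nonneg R)
      have hq : 0 < 4 * b ^ 2 / Real.pi := by positivity
      have h := one_div_le_one_div_of_le hq hCge2
      rwa [one_div_div] at h
    have h2 : Real.pi / (4 * b ^ 2) * R ^ 2 ≤ Real.pi * (ρ / 2) ^ 2 * 4 := by
      have hsq : (R / (2 * b)) ^ 2 ≤ ρ ^ 2 := pow_le_pow_left₀ (by positivity) hρhalf 2
      calc Real.pi / (4 * b ^ 2) * R ^ 2 = Real.pi * (R / (2 * b)) ^ 2 := by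
            field_simp; ring
        _ ≤ Real.pi * ρ ^ 2 := by nlinarith
        _ = Real.pi * (ρ / 2) ^ 2 * 4 := by ring
    linarith
  · -- upper bound
    calc hypArea Bset ≤ K * (volume Bset).toReal := hhigh
      _ ≤ K * (Real.pi * (2 * R) ^ 2) := mul_le_mul_of_nonneg_left hm_up hKpos.le
      _ = 4 * Real.pi * K * R ^ 2 := by ring
      _ ≤ C * R ^ 2 := mul_le_mul_of_nonneg_right hCge1 (sq_nonneg R)
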